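/- Let x₁, x₂ ∈ {0, −1, 1}ⁿ have disjoint supports, and set S_i = {j : (x_i)_j = 1} and T_i = {j : (x_i)_j = −1} for i ∈ {1, 2}. Let u = 𝟙_{S₁∪S₂} − 𝟙_{T₁∪T₂} and v = 𝟙_{S₁∪T₂} − 𝟙_{S₂∪T₁}. Then u and v have all entries in {0, −1, 1} and x₁x₁ᵀ + x₂x₂ᵀ = (1/2) u uᵀ + (1/2) v vᵀ; in particular, every ternary PSD matrix of rank 2 is a convex combination of two rank-one ternary PSD matrices. -/

import Mathlib

open Matrix

private lemma quad_expand {n : ℕ} (X : Matrix (Fin n) (Fin n) ℝ) {a b : Fin n} (hab : a ≠ b)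
    (s t : ℝ) :
    (Pi.single a s + Pi.single b t) ⬝ᵥ X *ᵥ (Pi.single a s + Pi.single b t) =
      s * s * X a a + s * t * X a b + t * s * X b a + t * t * X b b := by
  simp [Matrix.mulVec_add, Matrix.mulVec_single, add_dotProduct, single_dotProduct,
    Pi.add_apply]
  ring

private lemma symm_apply {n : ℕ} {X : Matrix (Fin n) (Fin n) ℝ} (hX : X.PosSemidef)
    (i j : Fin n) : X i j = X j i := by
  conv_lhs => rw [← hX.1]
  simp [conjTranspose_apply]

private lemma diag01 {n : ℕ} {X : Matrix (Fin n) (Fin n) ℝ}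
    (ht : ∀ i j, X i j = 0 ∨ X i j = -1 ∨ X i j = 1) (hX : X.PosSemidef) (i : Fin n) :
    X i i = 0 ∨ X i i = 1 := by
  have h0 : (0:ℝ) ≤ X i i := by
    have h := hX.dotProduct_mulVec_nonneg (Pi.single i 1)
    rw [star_trivial] at h
    simpa [Matrix.mulVec_single, single_dotProduct] using h
  rcases ht i i with h | h | h
  · exact Or.inl h
  · rw [h] at h0; linarith
  · exact Or.inr h

private lemma zero_row {n : ℕ} {X : Matrix (Fin n) (Fin n) ℝ}
    (ht : ∀ i j, X i j = 0 ∨ X i j = -1 ∨ X i j = 1) (hX : X.PosSemidef) {a : Fin n}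
    (hd : X a a = 0) (b : Fin n) : X a b = 0 := by
  by_cases hab : a = b
  · subst hab; exact hd
  have hsym : X b a = X a b := symm_apply hX b a
  have hbb : X b b ≤ 1 := by rcases ht b b with h | h | h <;> rw [h] <;> norm_num
  rcases ht a b with h | h | h
  · exact h
  · have hq := hX.dotProduct_mulVec_nonneg (Pi.single a 1 + Pi.single b 1)
    rw [star_trivial, quad_expand X hab] at hq
    rw [hd, h, hsym, h] at hq
    linarith
  · have hq := hX.dotProduct_mulVec_nonneg (Pi.single a (-1) + Pi.single b 1)
    rw [star_trivial, quad_expand X hab] at hq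
    rw [hd, h, hsym, h] at hq
    linarith

private lemma row_rel {n : ℕ} {X : Matrix (Fin n) (Fin n) ℝ}
    (ht : ∀ i j, X i j = 0 ∨ X i j = -1 ∨ X i j = 1) (hX : X.PosSemidef) {a b : Fin n}
    (hab : X a b ≠ 0) : ∀ k, X b k = X a b * X a k := by
  have haa : X a a = 1 := by
    rcases diag01 ht hX a with h | h
    · exact absurd (zero_row ht hX h b) hab
    · exact h
  have hba : X b a ≠ 0 := by rw [symm_apply hX b a]; exact hab
  have hbb : X b b = 1 := by
    rcases diag01 ht hX b with h | h
    · exact absurd (zero_row ht hX h a) hba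
    · exact h
  by_cases hab' : a = b
  · subst hab'
    intro k
    rw [haa, one_mul]
  intro k
  have hsq : X a b * X a b = 1 := by
    rcases ht a b with h | h | h
    · exact absurd h hab
    · rw [h]; norm_num
    · rw [h]; norm_num
  have hq : (Pi.single a (X a b) + Pi.single b (-1)) ⬝ᵥ
      X *ᵥ (Pi.single a (X a b) + Pi.single b (-1)) = 0 := by
    rw [quad_expand X hab', haa, hbb, symm_apply hX b a]
    nlinarith [hsq]
  have hker : X *ᵥ (Pi.single a (X a b) + Pi.single b (-1)) = 0 := by
    rw [← hX.dotProduct_mulVec_zero_iff]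
    rw [star_trivial]
    exact hq
  have hk := congrFun hker k
  simp [Matrix.mulVec_add, Matrix.mulVec_single, Pi.add_apply] at hk
  have h1 : X k b = X a b * X k a := by linarith
  rw [symm_apply hX b k, h1, symm_apply hX k a]

private lemma decomp {n : ℕ} {X : Matrix (Fin n) (Fin n) ℝ}
    (ht : ∀ i j, X i j = 0 ∨ X i j = -1 ∨ X i j = 1) (hX : X.PosSemidef)
    (hr : X.rank = 2) :
    ∃ y₁ y₂ : Fin n → ℝ, (∀ j, y₁ j = 0 ∨ y₁ j = -1 ∨ y₁ j = 1) ∧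
      (∀ j, y₂ j = 0 ∨ y₂ j = -1 ∨ y₂ j = 1) ∧ (∀ j, y₁ j = 0 ∨ y₂ j = 0) ∧
      X = vecMulVec y₁ y₁ + vecMulVec y₂ y₂ := by
  have hT : Xᵀ = X := by
    rw [← X.conjTranspose_eq_transpose_of_trivial, hX.1]
  have hrank : Module.finrank ℝ (Submodule.span ℝ (Set.range X)) = 2 := by
    rw [Matrix.rank_eq_finrank_span_cols, show X.col = X from hT] at hr
    exact hr
  -- first index
  have step1 : ∃ i₁, X i₁ i₁ = 1 := by
    by_contra h
    push_neg at h
    have hz : X = 0 := by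
      ext a b
      have haa : X a a = 0 := (diag01 ht hX a).resolve_right (h a)
      simpa using zero_row ht hX haa b
    rw [hz, Matrix.rank_zero] at hr
    norm_num at hr
  obtain ⟨i₁, hi₁⟩ := step1
  have hne₁ : X i₁ ≠ 0 := fun h => by
    have := congrFun h i₁
    rw [hi₁] at this
    norm_num at this
  -- second index
  have step2 : ∃ i₂, X i₂ i₂ = 1 ∧ X i₁ i₂ = 0 := by
    by_contra h
    push_neg at h
    have hspan : Submodule.span ℝ (Set.range X) ≤ Submodule.span ℝ {X i₁} := by
      rw [Submodule.span_le]
      rintro _ ⟨b, rfl⟩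
      rcases diag01 ht hX b with hb | hb
      · have : X b = 0 := funext (zero_row ht hX hb)
        rw [this]
        exact Submodule.zero_mem _
      · have hnb : X i₁ b ≠ 0 := h b hb
        have hrel := row_rel ht hX hnb
        have : X b = X i₁ b • X i₁ := funext fun k => by
          rw [hrel k]; rfl
        rw [this]
        exact Submodule.smul_mem _ _ (Submodule.mem_span_singleton_self _)
    have hle := Submodule.finrank_mono hspan
    rw [hrank, finrank_span_singleton hne₁] at hle
    omega
  obtain ⟨i₂, hi₂, h12⟩ := step2
  have h21 : X i₂ i₁ = 0 := by rw [symm_apply hX i₂ i₁]; exact h12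
  -- coverage
  have hcov : ∀ a, X a a = 1 → X i₁ a ≠ 0 ∨ X i₂ a ≠ 0 := by
    intro a haa
    by_contra h
    push_neg at h
    obtain ⟨h1, h2⟩ := h
    have ha1 : X a i₁ = 0 := by rw [symm_apply hX a i₁]; exact h1
    have ha2 : X a i₂ = 0 := by rw [symm_apply hX a i₂]; exact h2
    set f : Fin 3 → Fin n := ![i₁, i₂, a] with hf
    have hmem : ∀ k, X (f k) ∈ Submodule.span ℝ (Set.range X) :=
      fun k => Submodule.subset_span (Set.mem_range_self _)
    set w : Fin 3 → Submodule.span ℝ (Set.range X) := fun k => ⟨X (f k), hmem k⟩ with hw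
    have hli : LinearIndependent ℝ w := by
      apply LinearIndependent.of_comp (Submodule.span ℝ (Set.range X)).subtype
      rw [Fintype.linearIndependent_iff]
      intro g hg
      have hc : ∀ m, g 0 * X i₁ m + g 1 * X i₂ m + g 2 * X a m = 0 := by
        intro m
        have := congrFun hg m
        simpa [Fin.sum_univ_three, hf, hw, Function.comp] using this
      have hg0 : g 0 = 0 := by
        have := hc i₁
        rw [hi₁, h21, ha1] at this
        linarith
      have hg1 : g 1 = 0 := by
        have := hc i₂
        rw [hi₂, h12, ha2] at this
        linarith
      have hg2 : g 2 = 0 := by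
        have := hc a
        rw [haa, h1, h2] at this
        linarith
      intro i
      fin_cases i <;> assumption
    have h3 : 3 ≤ Module.finrank ℝ (Submodule.span ℝ (Set.range X)) := by
      simpa using hli.fintype_card_le_finrank
    omega
  -- disjointness
  have hdis : ∀ j, X i₁ j = 0 ∨ X i₂ j = 0 := by
    intro j
    by_contra h
    push_neg at h
    obtain ⟨h1, h2⟩ := h
    have e1 := row_rel ht hX h1 i₂
    rw [h12, mul_zero] at e1
    have e2 := row_rel ht hX h2 i₂
    rw [hi₂, mul_one] at e2
    rw [e1] at e2
    exact h2 e2.symm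
  refine ⟨X i₁, X i₂, ht i₁, ht i₂, hdis, ?_⟩
  ext a b
  simp only [Matrix.add_apply, vecMulVec_apply]
  rcases diag01 ht hX a with haa | haa
  · have h0 : X a b = 0 := zero_row ht hX haa b
    have h1 : X i₁ a = 0 := by rw [symm_apply hX i₁ a]; exact zero_row ht hX haa i₁
    have h2 : X i₂ a = 0 := by rw [symm_apply hX i₂ a]; exact zero_row ht hX haa i₂
    rw [h0, h1, h2]; ring
  · rcases hcov a haa with h1 | h1
    · have h2 : X i₂ a = 0 := (hdis a).resolve_left h1
      have := row_rel ht hX h1 b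
      rw [this, h2]; ring
    · have h2 : X i₁ a = 0 := (hdis a).resolve_right h1
      have := row_rel ht hX h1 b
      rw [this, h2]; ring

theorem stmt_4 (n : ℕ) (x₁ x₂ : Fin n → ℝ)
    (hx₁ : ∀ j, x₁ j = 0 ∨ x₁ j = -1 ∨ x₁ j = 1)
    (hx₂ : ∀ j, x₂ j = 0 ∨ x₂ j = -1 ∨ x₂ j = 1)
    (hdisj : ∀ j, x₁ j = 0 ∨ x₂ j = 0)
    (u v : Fin n → ℝ)
    (hu : ∀ j, u j = (if x₁ j = 1 ∨ x₂ j = 1 then (1 : ℝ) else 0) -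
      (if x₁ j = -1 ∨ x₂ j = -1 then (1 : ℝ) else 0))
    (hv : ∀ j, v j = (if x₁ j = 1 ∨ x₂ j = -1 then (1 : ℝ) else 0) -
      (if x₂ j = 1 ∨ x₁ j = -1 then (1 : ℝ) else 0)) :
    ((∀ j, u j = 0 ∨ u j = -1 ∨ u j = 1) ∧
     (∀ j, v j = 0 ∨ v j = -1 ∨ v j = 1) ∧
     vecMulVec x₁ x₁ + vecMulVec x₂ x₂ =
       (1 / 2 : ℝ) • vecMulVec u u + (1 / 2 : ℝ) • vecMulVec v v) ∧
    (∀ X : Matrix (Fin n) (Fin n) ℝ,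
      (∀ i j, X i j = 0 ∨ X i j = -1 ∨ X i j = 1) → X.PosSemidef → X.rank = 2 →
      ∃ u' v' : Fin n → ℝ,
        (∀ j, u' j = 0 ∨ u' j = -1 ∨ u' j = 1) ∧
        (∀ j, v' j = 0 ∨ v' j = -1 ∨ v' j = 1) ∧
        X = (1 / 2 : ℝ) • vecMulVec u' u' + (1 / 2 : ℝ) • vecMulVec v' v') := by
  have hu' : ∀ j, u j = x₁ j + x₂ j := by
    intro j
    rcases hdisj j with h | h
    · rcases hx₂ j with h2 | h2 | h2 <;> rw [hu j, h, h2] <;> norm_num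
    · rcases hx₁ j with h1 | h1 | h1 <;> rw [hu j, h, h1] <;> norm_num
  have hv' : ∀ j, v j = x₁ j - x₂ j := by
    intro j
    rcases hdisj j with h | h
    · rcases hx₂ j with h2 | h2 | h2 <;> rw [hv j, h, h2] <;> norm_num
    · rcases hx₁ j with h1 | h1 | h1 <;> rw [hv j, h, h1] <;> norm_num
  constructor
  · refine ⟨?_, ?_, ?_⟩
    · intro j
      rcases hdisj j with h | h
      · rcases hx₂ j with h2 | h2 | h2 <;> rw [hu' j, h, h2] <;> norm_num
      · rcases hx₁ j with h1 | h1 | h1 <;> rw [hu' j, h, h1] <;> norm_num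
    · intro j
      rcases hdisj j with h | h
      · rcases hx₂ j with h2 | h2 | h2 <;> rw [hv' j, h, h2] <;> norm_num
      · rcases hx₁ j with h1 | h1 | h1 <;> rw [hv' j, h, h1] <;> norm_num
    · ext i j
      simp only [Matrix.add_apply, Matrix.smul_apply, vecMulVec_apply, smul_eq_mul,
        hu' i, hu' j, hv' i, hv' j]
      ring
  · intro X htX hpsd hrk
    obtain ⟨y₁, y₂, hy₁, hy₂, hyd, hXeq⟩ := decomp htX hpsd hrk
    refine ⟨fun j => y₁ j + y₂ j, fun j => y₁ j - y₂ j, ?_, ?_, ?_⟩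
    · intro j
      rcases hyd j with h | h
      · rcases hy₂ j with h2 | h2 | h2 <;> norm_num [h, h2]
      · rcases hy₁ j with h1 | h1 | h1 <;> norm_num [h, h1]
    · intro j
      rcases hyd j with h | h
      · rcases hy₂ j with h2 | h2 | h2 <;> norm_num [h, h2]
      · rcases hy₁ j with h1 | h1 | h1 <;> norm_num [h, h1]
    · rw [hXeq]
      ext i j
      simp only [Matrix.add_apply, Matrix.smul_apply, vecMulVec_apply, smul_eq_mul]
      ring
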